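/- The polynomial g(t) = t^5 + 65·t^4 − 870·t^3 − 18990·t^2 + 26325·t + 255069 is irreducible over ℚ. -/
import Mathlib
open Polynomial Finset

-- expansion lemmas
lemma expand2 {R : Type*} [CommRing R] {p : R[X]} (hm : p.Monic) (hd : p.natDegree = 2) :
    p = X ^ 2 + C (p.coeff 1) * X + C (p.coeff 0) := by
  have h := p.as_sum_range' 3 (by omega)
  have hc2 : p.coeff 2 = 1 := by
    have := hm; rwa [Monic, leadingCoeff, hd] at this
  rw [h]
  simp [Finset.sum_range_succ, hc2, ← C_mul_X_pow_eq_monomial]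
  ring

lemma expand3 {R : Type*} [CommRing R] {p : R[X]} (hm : p.Monic) (hd : p.natDegree = 3) :
    p = X ^ 3 + C (p.coeff 2) * X ^ 2 + C (p.coeff 1) * X + C (p.coeff 0) := by
  have h := p.as_sum_range' 4 (by omega)
  have hc3 : p.coeff 3 = 1 := by
    have := hm; rwa [Monic, leadingCoeff, hd] at this
  rw [h]
  simp [Finset.sum_range_succ, hc3, ← C_mul_X_pow_eq_monomial]
  ring

lemma key1 : ∀ z : ZMod 19, ¬((-z) ^ 5 + 65 * (-z) ^ 4 - 870 * (-z) ^ 3 - 18990 * (-z) ^ 2 +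
        26325 * (-z) + 255069 = 0) := by decide

lemma key2 : ∀ a b : ZMod 19,
    ¬ (((-18990) - ((-870) - (65 - a) * a - b) * a - (65 - a) * b) * a
        + ((-870) - (65 - a) * a - b) * b = 26325 ∧
      ((-18990) - ((-870) - (65 - a) * a - b) * a - (65 - a) * b) * b = 255069) := by decide

theorem zmod_irred : Irreducible (X ^ 5 + C 65 * X ^ 4 - C 870 * X ^ 3 - C 18990 * X ^ 2 +
      C 26325 * X + C 255069 : (ZMod 19)[X]) := by
  haveI : Fact (Nat.Prime 19) := ⟨by norm_num⟩
  set f : (ZMod 19)[X] := X ^ 5 + C 65 * X ^ 4 - C 870 * X ^ 3 - C 18990 * X ^ 2 +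
      C 26325 * X + C 255069 with hf
  have hmon : f.Monic := by unfold f; monicity!
  have hdeg : f.natDegree = 5 := by unfold f; compute_degree!
  rw [hmon.irreducible_iff_natDegree']
  constructor
  · intro h1
    have := congrArg (fun p => Polynomial.coeff p 5) (hf.symm.trans h1)
    simp [coeff_one] at this
  rintro g h hg hh he hd
  rw [hdeg] at hd
  simp only [Finset.mem_Ioc] at hd
  obtain ⟨hd1, hd2⟩ := hd
  norm_num at hd2
  have hdegs : g.natDegree + h.natDegree = 5 := by
    rw [← hg.natDegree_mul hh, he, hdeg]
  interval_cases hn : h.natDegree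
  · -- degree 1 factor
    have hb := hh.eq_X_add_C hn
    set b := h.coeff 0
    have hroot : f.eval (-b) = 0 := by
      rw [← he, hb, eval_mul]
      simp
    rw [hf] at hroot
    simp only [eval_add, eval_sub, eval_mul, eval_pow, eval_X, eval_C] at hroot
    exact key1 b hroot
  · -- degree 2 factor
    have hg3 : g.natDegree = 3 := by omega
    have hh2 := expand2 hh hn
    have hg2 := expand3 hg hg3
    set a := h.coeff 1
    set b := h.coeff 0
    set c := g.coeff 2
    set d := g.coeff 1
    set e := g.coeff 0
    rw [hh2, hg2, hf] at he
    have hexp : (X ^ 3 + C c * X ^ 2 + C d * X + C e) * (X ^ 2 + C a * X + C b)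
        = X ^ 5 + C (c + a) * X ^ 4 + C (d + c * a + b) * X ^ 3 + C (e + d * a + c * b) * X ^ 2
          + C (e * a + d * b) * X + C (e * b) := by
      simp only [C_add, C_mul]; ring
    rw [hexp] at he
    have h4 := congrArg (fun p => p.coeff 4) he
    have h3 := congrArg (fun p => p.coeff 3) he
    have h2 := congrArg (fun p => p.coeff 2) he
    have h1 := congrArg (fun p => p.coeff 1) he
    have h0 := congrArg (fun p => p.coeff 0) he
    simp only [coeff_add, coeff_sub, coeff_C_mul, coeff_X_pow, coeff_C, coeff_X] at h4 h3 h2 h1 h0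
    norm_num at h4 h3 h2 h1 h0
    have hc : c = 65 - a := by linear_combination h4
    rw [hc] at h3 h2
    have hdd : d = -870 - (65 - a) * a - b := by linear_combination h3
    rw [hdd] at h2 h1
    have hee : e = -18990 - (-870 - (65 - a) * a - b) * a - (65 - a) * b := by
      linear_combination h2
    rw [hee] at h1 h0
    exact key2 a b ⟨h1, h0⟩

theorem quintic_irreducible :
    Irreducible (X ^ 5 + C 65 * X ^ 4 - C 870 * X ^ 3 - C 18990 * X ^ 2 +
      C 26325 * X + C 255069 : ℚ[X]) := by
  have hZmon : (X ^ 5 + C 65 * X ^ 4 - C 870 * X ^ 3 - C 18990 * X ^ 2 +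
      C 26325 * X + C 255069 : ℤ[X]).Monic := by monicity!
  have hmap19 : (X ^ 5 + C 65 * X ^ 4 - C 870 * X ^ 3 - C 18990 * X ^ 2 +
      C 26325 * X + C 255069 : ℤ[X]).map (Int.castRingHom (ZMod 19)) =
      (X ^ 5 + C 65 * X ^ 4 - C 870 * X ^ 3 - C 18990 * X ^ 2 +
      C 26325 * X + C 255069 : (ZMod 19)[X]) := by
    simp [Polynomial.map_add, Polynomial.map_sub, Polynomial.map_mul, Polynomial.map_pow,
      Polynomial.map_ofNat, map_ofNat]
  haveI : Fact (Nat.Prime 19) := ⟨by norm_num⟩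
  have hZ : Irreducible (X ^ 5 + C 65 * X ^ 4 - C 870 * X ^ 3 - C 18990 * X ^ 2 +
      C 26325 * X + C 255069 : ℤ[X]) :=
    hZmon.irreducible_of_irreducible_map (Int.castRingHom (ZMod 19)) _ (hmap19 ▸ zmod_irred)
  have h := (hZmon.irreducible_iff_irreducible_map_fraction_map (K := ℚ)).mp hZ
  have hmapQ : (X ^ 5 + C 65 * X ^ 4 - C 870 * X ^ 3 - C 18990 * X ^ 2 +
      C 26325 * X + C 255069 : ℤ[X]).map (algebraMap ℤ ℚ) =
      (X ^ 5 + C 65 * X ^ 4 - C 870 * X ^ 3 - C 18990 * X ^ 2 +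
      C 26325 * X + C 255069 : ℚ[X]) := by
    simp [Polynomial.map_add, Polynomial.map_sub, Polynomial.map_mul, Polynomial.map_pow,
      map_ofNat]
  rwa [hmapQ] at h
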